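/- Every n×n orthogonal matrix Q can be written as Q = H_n(u_n)·…·H_2(u_2)·H_1(u_1) for some vectors u_k ∈ R^k (k = 2,…,n, nonzero) and some scalar u_1 ∈ {-1, 1}, where H_1(u) = diag(I_{n-1}, u). -/

import Mathlib

open Matrix

/-- The Householder reflection `I - 2 u uᵀ / ‖u‖²`; for `u` supported on the last `k`
coordinates this is the block matrix `H_k(u) = diag(I_{n-k}, I_k - 2 ũ ũᵀ/‖ũ‖²)`. -/
noncomputable def householder {n : ℕ} (u : Fin n → ℝ) : Matrix (Fin n) (Fin n) ℝ :=
  1 - (2 / ∑ i, u i ^ 2) • vecMulVec u u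

/-- `H_1(u) = diag(I_{n-1}, u)`. -/
def H1 {n : ℕ} (u : ℝ) : Matrix (Fin n) (Fin n) ℝ :=
  Matrix.diagonal (fun i => if (i : ℕ) = n - 1 then u else 1)

lemma sum_sq_ne_zero {n : ℕ} {u : Fin n → ℝ} (hu : u ≠ 0) : (∑ i, u i ^ 2) ≠ 0 := by
  intro h
  apply hu
  funext i
  have := (Finset.sum_eq_zero_iff_of_nonneg (fun i _ => sq_nonneg (u i))).1 h i (Finset.mem_univ i)
  exact pow_eq_zero_iff (n := 2) (by norm_num) |>.1 this

lemma householder_apply {n : ℕ} (u : Fin n → ℝ) (i j : Fin n) :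
    householder u i j = (if i = j then 1 else 0) - (2 / ∑ m, u m ^ 2) * (u i * u j) := by
  simp [householder, vecMulVec_apply, one_apply]

lemma householder_transpose {n : ℕ} (u : Fin n → ℝ) :
    (householder u)ᵀ = householder u := by
  ext i j
  simp only [transpose_apply, householder_apply]
  rw [mul_comm (u j) (u i)]
  congr 1
  simp [eq_comm]

lemma householder_mul_self {n : ℕ} {u : Fin n → ℝ} (hu : u ≠ 0) :
    householder u * householder u = 1 := by
  have hs := sum_sq_ne_zero hu
  ext i j
  rw [mul_apply]
  simp only [householder_apply, one_apply]
  have : ∀ m, ((if i = m then 1 else 0) - (2 / ∑ l, u l ^ 2) * (u i * u m)) *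
      ((if m = j then 1 else 0) - (2 / ∑ l, u l ^ 2) * (u m * u j)) =
      (if i = m then (1:ℝ) else 0) * (if m = j then (1:ℝ) else 0)
      - (if i = m then 1 else 0) * ((2 / ∑ l, u l ^ 2) * (u m * u j))
      - ((2 / ∑ l, u l ^ 2) * (u i * u m)) * (if m = j then 1 else 0)
      + (2 / ∑ l, u l ^ 2) * (2 / ∑ l, u l ^ 2) * u i * u j * u m ^ 2 := by
    intro m; ring
  rw [Finset.sum_congr rfl (fun m _ => this m)]
  simp only [Finset.sum_add_distrib, Finset.sum_sub_distrib, ite_mul, one_mul, zero_mul,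
    mul_ite, mul_one, mul_zero, Finset.sum_ite_eq, Finset.sum_ite_eq', Finset.mem_univ, if_true]
  rw [← Finset.mul_sum]
  field_simp
  split <;> ring

lemma householder_row_apply {n : ℕ} (u : Fin n → ℝ) (Q : Matrix (Fin n) (Fin n) ℝ)
    (i j : Fin n) : (householder u * Q) i j
      = Q i j - (2 / ∑ m, u m ^ 2) * (∑ m, u m * Q m j) * u i := by
  rw [mul_apply]
  simp only [householder_apply, sub_mul, ite_mul, one_mul, zero_mul]
  rw [Finset.sum_sub_distrib, Finset.sum_ite_eq, if_pos (Finset.mem_univ i)]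
  congr 1
  rw [Finset.mul_sum, Finset.sum_mul]
  congr 1; funext m; ring

lemma step {n k : ℕ} (hk2 : 2 ≤ k) (hkn : k ≤ n)
    (Q : Matrix (Fin n) (Fin n) ℝ) (hQ : Q * Qᵀ = 1)
    (htriv : ∀ i j : Fin n, ((i:ℕ) < n - k ∨ (j:ℕ) < n - k) → Q i j = if i = j then 1 else 0) :
    ∃ u : Fin n → ℝ, u ≠ 0 ∧ (∀ i : Fin n, (i:ℕ) < n - k → u i = 0) ∧
      Q = householder u * (householder u * Q) ∧
      (householder u * Q) * (householder u * Q)ᵀ = 1 ∧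
      (∀ i j : Fin n, ((i:ℕ) < n - (k-1) ∨ (j:ℕ) < n - (k-1)) →
        (householder u * Q) i j = if i = j then 1 else 0) := by
  have hn : 0 < n := by omega
  set p : Fin n := ⟨n - k, by omega⟩ with hp
  have hQ' : Qᵀ * Q = 1 := mul_eq_one_comm.mp hQ
  have hxnorm : ∑ i, Q i p ^ 2 = 1 := by
    have h1 : (Qᵀ * Q) p p = 1 := by rw [hQ']; simp [one_apply]
    rw [mul_apply] at h1
    rw [← h1]
    congr 1; funext m; rw [transpose_apply]; ring
  have hx0 : ∀ i : Fin n, (i:ℕ) < n - k → Q i p = 0 := by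
    intro i hi
    rw [htriv i p (Or.inl hi), if_neg]
    intro h; rw [h] at hi; simp [hp] at hi
  -- obtain the Householder vector
  obtain ⟨u, hu0, hup, hHx⟩ : ∃ u : Fin n → ℝ, u ≠ 0 ∧
      (∀ i : Fin n, (i:ℕ) < n - k → u i = 0) ∧
      (∀ i, (householder u * Q) i p = if i = p then 1 else 0) := by
    by_cases hxe : (fun i => Q i p) = (fun i => if i = p then (1:ℝ) else 0)
    · -- column already e_p; use u = e_{n-1}
      set l : Fin n := ⟨n - 1, by omega⟩ with hl
      have hlp : l ≠ p := by
        intro h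
        have := congrArg Fin.val h
        simp [hl, hp] at this; omega
      refine ⟨fun i => if i = l then 1 else 0, ?_, ?_, ?_⟩
      · intro h
        have := congrFun h l
        simp at this
      · intro i hi
        have hil : i ≠ l := by
          intro h; rw [h] at hi; simp [hl] at hi; omega
        simp [hil]
      · intro i
        rw [householder_row_apply]
        have hz : ∑ m, (if m = l then (1:ℝ) else 0) * Q m p = 0 := by
          rw [Finset.sum_eq_single l]
          · rw [if_pos rfl, one_mul, congrFun hxe l, if_neg hlp]
          · intro b _ hb; rw [if_neg hb, zero_mul]
          · intro h; exact absurd (Finset.mem_univ l) h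
        rw [hz, mul_zero, zero_mul, sub_zero, congrFun hxe i]
    · -- u = x - e_p
      set u : Fin n → ℝ := fun i => Q i p - (if i = p then 1 else 0) with hu
      have hu0 : u ≠ 0 := by
        intro h
        apply hxe
        funext i
        have := congrFun h i
        simp only [hu, Pi.zero_apply] at this
        linarith [this]
      have h1 : ∑ m, u m * Q m p = 1 - Q p p := by
        have : ∀ m, u m * Q m p = Q m p ^ 2 - (if m = p then Q m p else 0) := by
          intro m; by_cases hm : m = p <;> simp [hu, hm] <;> ring
        rw [Finset.sum_congr rfl (fun m _ => this m), Finset.sum_sub_distrib, hxnorm,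
          Finset.sum_ite_eq' Finset.univ p (fun m => Q m p), if_pos (Finset.mem_univ p)]
      have h2 : ∑ m, u m ^ 2 = 2 - 2 * Q p p := by
        have : ∀ m, u m ^ 2 = Q m p ^ 2 - 2 * (if m = p then Q m p else 0)
            + (if m = p then 1 else 0) := by
          intro m; by_cases hm : m = p <;> simp [hu, hm] <;> ring
        rw [Finset.sum_congr rfl (fun m _ => this m)]
        rw [Finset.sum_add_distrib, Finset.sum_sub_distrib, hxnorm, ← Finset.mul_sum,
          Finset.sum_ite_eq' Finset.univ p (fun m => Q m p), if_pos (Finset.mem_univ p),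
          Finset.sum_ite_eq' Finset.univ p (fun _ => (1:ℝ)), if_pos (Finset.mem_univ p)]
        ring
      have hsne : (∑ m, u m ^ 2) ≠ 0 := sum_sq_ne_zero hu0
      refine ⟨u, hu0, ?_, ?_⟩
      · intro i hi
        simp only [hu]
        rw [hx0 i hi, if_neg, sub_zero]
        intro h; rw [h] at hi; simp [hp] at hi
      · intro i
        rw [householder_row_apply, h1, h2]
        have hqp : Q p p ≠ 1 := by
          intro h; rw [h] at h2; simp at h2; rw [h2] at hsne; simp at hsne
        have : 2 / (2 - 2 * Q p p) * (1 - Q p p) = 1 := by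
          have hne : 2 - 2 * Q p p ≠ 0 := by intro h; apply hqp; linarith
          field_simp
        rw [this, one_mul]
        simp only [hu]; ring
  have horth : (householder u * Q) * (householder u * Q)ᵀ = 1 := by
    rw [transpose_mul, householder_transpose, mul_assoc, ← mul_assoc Q, hQ, one_mul,
      householder_mul_self hu0]
  refine ⟨u, hu0, hup, ?_, horth, ?_⟩
  · rw [← mul_assoc, householder_mul_self hu0, one_mul]
  · have hH : ∀ i j : Fin n, ((i:ℕ) < n - k ∨ (j:ℕ) < n - k) →
        householder u i j = if i = j then 1 else 0 := by
      intro i j h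
      rw [householder_apply]
      rcases h with h | h
      · rw [hup i h, zero_mul, mul_zero, sub_zero]
      · rw [hup j h, mul_zero, mul_zero, sub_zero]
    have hrow : ∀ j : Fin n, j ≠ p → (householder u * Q) p j = 0 := by
      intro j hj
      have h1 : ((householder u * Q) * (householder u * Q)ᵀ) p p = 1 := by
        rw [horth]; simp [one_apply]
      rw [mul_apply] at h1
      have h2 : ∑ m, (householder u * Q) p m ^ 2 = 1 := by
        rw [← h1]; congr 1; funext m; rw [transpose_apply]; ring
      have h3 : ∑ m ∈ Finset.univ.erase p, (householder u * Q) p m ^ 2 = 0 := by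
        rw [← Finset.add_sum_erase Finset.univ _ (Finset.mem_univ p)] at h2
        have hpp : (householder u * Q) p p = 1 := by rw [hHx p, if_pos rfl]
        rw [hpp] at h2
        linarith
      have h4 := (Finset.sum_eq_zero_iff_of_nonneg
        (fun m _ => sq_nonneg ((householder u * Q) p m))).1 h3 j
        (Finset.mem_erase.mpr ⟨hj, Finset.mem_univ j⟩)
      exact pow_eq_zero_iff (n := 2) (by norm_num) |>.1 h4
    intro i j h
    have hsub : n - (k - 1) = (n - k) + 1 := by omega
    rw [hsub] at h
    rcases h with h | h
    · rcases Nat.lt_succ_iff_lt_or_eq.mp h with h | h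
      · have heq : (householder u * Q) i j = Q i j := by
          rw [mul_apply, Finset.sum_eq_single i]
          · rw [hH i i (Or.inl h), if_pos rfl, one_mul]
          · intro b _ hb
            rw [hH i b (Or.inl h), if_neg (fun hh => hb hh.symm), zero_mul]
          · intro hh; exact absurd (Finset.mem_univ i) hh
        rw [heq]; exact htriv i j (Or.inl h)
      · have hip : i = p := Fin.ext h
        rw [hip]
        by_cases hjp : j = p
        · rw [hjp]; exact hHx p
        · rw [hrow j hjp, if_neg (fun hh => hjp hh.symm)]
    · rcases Nat.lt_succ_iff_lt_or_eq.mp h with h | h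
      · have heq : (householder u * Q) i j = householder u i j := by
          rw [mul_apply, Finset.sum_eq_single j]
          · rw [htriv j j (Or.inl h), if_pos rfl, mul_one]
          · intro b _ hb; rw [htriv b j (Or.inr h), if_neg hb, mul_zero]
          · intro hh; exact absurd (Finset.mem_univ j) hh
        rw [heq]; exact hH i j (Or.inr h)
      · have hjp : j = p := Fin.ext h
        rw [hjp]; exact hHx i

lemma aux {n : ℕ} : ∀ k, k ≤ n → ∀ Q : Matrix (Fin n) (Fin n) ℝ,
    Q * Qᵀ = 1 →
    (∀ i j : Fin n, ((i:ℕ) < n - k ∨ (j:ℕ) < n - k) → Q i j = if i = j then 1 else 0) →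
    ∃ (u : ℕ → (Fin n → ℝ)) (u₁ : ℝ), (u₁ = -1 ∨ u₁ = 1) ∧
      (∀ m, 2 ≤ m → m ≤ k → (u m ≠ 0 ∧ ∀ i : Fin n, (i:ℕ) < n - m → u m i = 0)) ∧
      Q = (((List.range (k - 1)).map (fun j => householder (u (k - j)))).prod) * H1 u₁ := by
  intro k
  induction k with
  | zero =>
    intro _ Q hQ htriv
    refine ⟨fun _ => fun i => if (i:ℕ) = n - 1 then 1 else 0, 1, Or.inr rfl,
      fun m h2 h0 => absurd h0 (by omega), ?_⟩
    simp only [List.range_zero, List.map_nil, List.prod_nil, one_mul]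
    ext i j
    rw [htriv i j (Or.inl (by simpa using i.isLt))]
    simp [H1, Matrix.diagonal_apply, Matrix.one_apply]
  | succ k ih =>
    intro hkn Q hQ htriv
    rcases Nat.eq_zero_or_pos k with hk0 | hk1
    · -- k + 1 = 1
      subst hk0
      have hn : 0 < n := by omega
      set l : Fin n := ⟨n - 1, by omega⟩ with hl
      have hoff : ∀ j : Fin n, j ≠ l → Q l j = 0 := by
        intro j hj
        rw [htriv l j (Or.inr ?_), if_neg (fun hh => hj hh.symm)]
        have : (j:ℕ) ≠ n - 1 := fun hh => hj (Fin.ext hh)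
        omega
      have hc : Q l l * Q l l = 1 := by
        have h1 : (Q * Qᵀ) l l = 1 := by rw [hQ]; simp [Matrix.one_apply]
        rw [mul_apply] at h1
        rw [← h1, Finset.sum_eq_single l]
        · rw [transpose_apply]
        · intro b _ hb; rw [hoff b hb, zero_mul]
        · intro hh; exact absurd (Finset.mem_univ l) hh
      refine ⟨fun _ => fun i => if (i:ℕ) = n - 1 then 1 else 0, Q l l,
        Or.symm (mul_self_eq_one_iff.mp hc), ?_, ?_⟩
      · intro m h2 h1; omega
      · simp only [Nat.sub_self, List.range_zero, List.map_nil, List.prod_nil, one_mul]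
        ext i j
        by_cases hij : i = j
        · subst hij
          by_cases hi : (i:ℕ) = n - 1
          · have : i = l := Fin.ext hi
            rw [this]
            simp [H1, Matrix.diagonal_apply_eq, hl]
          · rw [htriv i i (Or.inl (by omega)), if_pos rfl]
            simp [H1, Matrix.diagonal_apply_eq, hi]
        · have hij' : ((i:ℕ) < n - 1 ∨ (j:ℕ) < n - 1) := by
            by_contra hcon
            push_neg at hcon
            apply hij
            apply Fin.ext
            have h1 := i.isLt; have h2 := j.isLt
            omega
          rw [htriv i j hij', if_neg hij]
          simp [H1, Matrix.diagonal_apply_ne _ hij]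
    · -- step: k + 1 ≥ 2
      obtain ⟨u, hu0, hup, hfac, horth, htriv'⟩ :=
        step (k := k + 1) (by omega) hkn Q hQ htriv
      have hsub : k + 1 - 1 = k := rfl
      rw [hsub] at htriv'
      obtain ⟨u', u₁, hu₁, hprops, heq⟩ := ih (by omega) (householder u * Q) horth htriv'
      refine ⟨fun m => if m = k + 1 then u else u' m, u₁, hu₁, ?_, ?_⟩
      · intro m h2 hm
        by_cases hmk : m = k + 1
        · subst hmk
          simpa using ⟨hu0, hup⟩
        · have : m ≤ k := by omega
          simpa [hmk] using hprops m h2 this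
      · have hr : List.range (k + 1 - 1) = 0 :: (List.range (k - 1)).map Nat.succ := by
          rw [hsub]
          conv_lhs => rw [show k = (k - 1) + 1 by omega]
          exact List.range_succ_eq_map
        have hlist : (List.map (fun j => householder
              ((fun m => if m = k + 1 then u else u' m) (k + 1 - j))) (List.range (k + 1 - 1))).prod
            = householder u *
              (List.map (fun j => householder (u' (k - j))) (List.range (k - 1))).prod := by
          rw [hr, List.map_cons, List.prod_cons, List.map_map]
          congr 1
          · simp
          · congr 1
            apply List.map_congr_left
            intro j hj
            rw [List.mem_range] at hj
            simp only [Function.comp_apply]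
            have h1 : k + 1 - Nat.succ j = k - j := by omega
            rw [h1, if_neg (by omega)]
        rw [hlist, mul_assoc, ← heq]
        exact hfac


/-- every orthogonal `Q ∈ O(n)` can be written as
`Q = H_n(u_n) ⋯ H_2(u_2) H_1(u_1)` with nonzero `u_k ∈ ℝᵏ` and `u_1 ∈ {-1, 1}`. -/
theorem orthogonal_eq_householder_product {n : ℕ} (Q : Matrix (Fin n) (Fin n) ℝ)
    (hQ : Q * Q.transpose = 1) :
    ∃ (u : ℕ → (Fin n → ℝ)) (u₁ : ℝ), (u₁ = -1 ∨ u₁ = 1) ∧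
      (∀ k, 2 ≤ k → k ≤ n →
        (u k ≠ 0 ∧ ∀ i : Fin n, (i : ℕ) < n - k → u k i = 0)) ∧
      Q = (((List.range (n - 1)).map (fun j => householder (u (n - j)))).prod) * H1 u₁ := by
  exact aux n le_rfl Q hQ (fun i j h => absurd h (by omega))
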